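/- Let G be a finite simple connected graph with at least three vertices and let v1, v2, v3 be three distinct vertices of G. Then the Tutte matrix T(G, v1, v2, v3) is invertible over ℚ, i.e. det T(G, v1, v2, v3) ≠ 0. (In particular, for every 3-connected planar graph G and any three of its vertices, the pair (G, v1, v2, v3) is embedding-inducing in the sense of the paper.) -/
import Mathlib


/-- The Tutte matrix of a graph `G` with pinned vertices `v1, v2, v3`:
the row of a pinned vertex has a `1` on the diagonal and `0` elsewhere;
the row of a non-pinned vertex `u` has `deg u` on the diagonal,
`-1` at the neighbours of `u`, and `0` elsewhere. -/
def tutteMatrix {V : Type*} [Fintype V] [DecidableEq V] (G : SimpleGraph V)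
    [DecidableRel G.Adj] (v1 v2 v3 : V) : Matrix V V ℚ :=
  fun u w =>
    if u = v1 ∨ u = v2 ∨ u = v3 then (if u = w then 1 else 0)
    else if u = w then (G.degree u : ℚ)
    else if G.Adj u w then -1 else 0

lemma tutte_aux {V : Type*} [Fintype V] [DecidableEq V] (G : SimpleGraph V)
    [DecidableRel G.Adj] (v1 v2 v3 : V) (hG : G.Connected) (x : V → ℚ)
    (hx : (tutteMatrix G v1 v2 v3).mulVec x = 0) (u0 : V)
    (hmax : ∀ u, x u ≤ x u0) : x u0 = 0 := by
  have hpin : ∀ u, (u = v1 ∨ u = v2 ∨ u = v3) → x u = 0 := by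
    intro u hu
    have h := congrFun hx u
    simpa [Matrix.mulVec, dotProduct, tutteMatrix, hu, ite_mul, Finset.sum_ite_eq] using h
  have hdeg : ∀ u, ¬(u = v1 ∨ u = v2 ∨ u = v3) →
      (G.degree u : ℚ) * x u = ∑ w ∈ G.neighborFinset u, x w := by
    intro u hu
    have h := congrFun hx u
    simp only [Matrix.mulVec, dotProduct, tutteMatrix, hu, if_false, Pi.zero_apply] at h
    have hrw : ∀ w : V, (if u = w then (G.degree u : ℚ) else if G.Adj u w then -1 else 0) * x w
        = (if u = w then (G.degree u : ℚ) * x u else 0) + (if G.Adj u w then -(x w) else 0) := by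
      intro w
      by_cases h1 : u = w
      · subst h1; simp [G.irrefl]
      · by_cases h2 : G.Adj u w <;> simp [h1, h2]
    rw [Finset.sum_congr rfl (fun w _ => hrw w)] at h
    rw [Finset.sum_add_distrib, Finset.sum_ite_eq] at h
    simp only [Finset.mem_univ, if_true] at h
    have hneg : (∑ w : V, if G.Adj u w then -(x w) else 0)
        = -(∑ w : V, if G.Adj u w then x w else 0) := by
      rw [← Finset.sum_neg_distrib]
      exact Finset.sum_congr rfl (fun w _ => by split <;> simp)
    rw [hneg] at h
    rw [SimpleGraph.neighborFinset_eq_filter, Finset.sum_filter]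
    linarith
  have hwalk : ∀ (a b : V) (p : G.Walk a b), (b = v1 ∨ b = v2 ∨ b = v3) →
      x a = x u0 → x u0 = 0 := by
    intro a b p
    induction p with
    | nil => intro hb h; rw [← h]; exact hpin _ hb
    | @cons a' b' c' hadj q ih =>
      intro hb ha
      by_cases hp : a' = v1 ∨ a' = v2 ∨ a' = v3
      · rw [← ha]; exact hpin a' hp
      · have heq := hdeg a' hp
        have hall : ∀ w ∈ G.neighborFinset a', x w = x u0 := by
          have hle : ∀ w ∈ G.neighborFinset a', x w ≤ x u0 := fun w _ => hmax w
          have hsum : ∑ w ∈ G.neighborFinset a', x w = ∑ w ∈ G.neighborFinset a', x u0 := by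
            rw [← heq, Finset.sum_const, SimpleGraph.card_neighborFinset_eq_degree,
              nsmul_eq_mul, ha]
          exact fun w hw => ((Finset.sum_eq_sum_iff_of_le hle).mp hsum) w hw
        exact ih hb (hall b' ((SimpleGraph.mem_neighborFinset G a' b').mpr hadj))
  obtain ⟨p⟩ := hG.preconnected u0 v1
  exact hwalk u0 v1 p (Or.inl rfl) rfl

/-- For a connected graph with at least three vertices and three distinct pinned
vertices, the Tutte matrix is invertible over `ℚ`, i.e. has nonzero determinant. -/
theorem tutteMatrix_det_ne_zero {V : Type*} [Fintype V] [DecidableEq V]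
    (G : SimpleGraph V) [DecidableRel G.Adj] (hG : G.Connected)
    (hcard : 3 ≤ Fintype.card V)
    (v1 v2 v3 : V) (h12 : v1 ≠ v2) (h13 : v1 ≠ v3) (h23 : v2 ≠ v3) :
    (tutteMatrix G v1 v2 v3).det ≠ 0 := by
  intro hdet
  obtain ⟨x, hx0, hx⟩ := Matrix.exists_mulVec_eq_zero_iff.mpr hdet
  apply hx0
  have : Nonempty V := Fintype.card_pos_iff.mp (by omega)
  have hne : (Finset.univ : Finset V).Nonempty := Finset.univ_nonempty
  obtain ⟨u0, _, hu0⟩ := Finset.exists_max_image Finset.univ x hne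
  obtain ⟨u1, _, hu1⟩ := Finset.exists_max_image Finset.univ (-x) hne
  have h1 : x u0 = 0 := tutte_aux G v1 v2 v3 hG x hx u0 (fun u => hu0 u (Finset.mem_univ u))
  have h2 : (-x) u1 = 0 := by
    apply tutte_aux G v1 v2 v3 hG (-x) _ u1 (fun u => hu1 u (Finset.mem_univ u))
    rw [Matrix.mulVec_neg, hx, neg_zero]
  funext u
  have ha := hu0 u (Finset.mem_univ u)
  have hb := hu1 u (Finset.mem_univ u)
  simp only [Pi.neg_apply] at h2 hb
  simp only [Pi.zero_apply]
  linarith
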